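/- Let K be a field and consider ℤ-graded K-vector spaces with the graded tensor product. A ℤ-graded K-vector space V is invertible (i.e. there exists W with V ⊗ W ≅ K concentrated in degree 0) if and only if V is one-dimensional and concentrated in a single degree. -/

import Mathlib

open scoped TensorProduct DirectSum

section auxx
variable {K : Type} [Field K]

lemma ds_subsingleton' {ι : Type} (M : ι → Type) [∀ i, AddCommGroup (M i)]
    (h : ∀ i, Subsingleton (M i)) : Subsingleton (DirectSum ι M) :=
  ⟨fun _ _ => DFinsupp.ext fun i => @Subsingleton.elim _ (h i) _ _⟩

noncomputable def dsEquivComponent' {ι : Type} [DecidableEq ι] (M : ι → Type)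
    [∀ i, AddCommGroup (M i)] [∀ i, Module K (M i)] (i₀ : ι)
    (h : ∀ j, j ≠ i₀ → Subsingleton (M j)) : DirectSum ι M ≃ₗ[K] M i₀ :=
  LinearEquiv.ofLinear (DirectSum.component K ι M i₀) (DirectSum.lof K ι M i₀)
    (by ext x; simp)
    (by
      refine LinearMap.ext fun x => DFinsupp.ext fun j => ?_
      by_cases hj : j = i₀
      · subst hj
        simp [DirectSum.component]; rfl
      · exact @Subsingleton.elim _ (h j hj) _ _)

lemma equiv_of_rank_one' {M : Type} [AddCommGroup M] [Module K M]
    (h : Module.rank K M = 1) : Nonempty (M ≃ₗ[K] K) :=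
  nonempty_linearEquiv_of_rank_eq (by rw [h, Module.rank_self])

lemma ts_all_zero {M N : Type} [AddCommGroup M] [Module K M] [AddCommGroup N] [Module K N]
    (h : Subsingleton M ∨ Subsingleton N) (x : M ⊗[K] N) : x = 0 := by
  induction x using TensorProduct.induction_on with
  | zero => rfl
  | tmul m n =>
    rcases h with h | h
    · rw [@Subsingleton.elim _ h m 0, TensorProduct.zero_tmul]
    · rw [@Subsingleton.elim _ h n 0, TensorProduct.tmul_zero]
  | add x y hx hy => rw [hx, hy, add_zero]

lemma sub_ts_left {M N : Type} [AddCommGroup M] [Module K M] [AddCommGroup N] [Module K N]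
    (h : Subsingleton M) : Subsingleton (M ⊗[K] N) :=
  ⟨fun a b => by rw [ts_all_zero (Or.inl h) a, ts_all_zero (Or.inl h) b]⟩

lemma sub_ts_right {M N : Type} [AddCommGroup M] [Module K M] [AddCommGroup N] [Module K N]
    (h : Subsingleton N) : Subsingleton (M ⊗[K] N) :=
  ⟨fun a b => by rw [ts_all_zero (Or.inr h) a, ts_all_zero (Or.inr h) b]⟩

lemma card_mul_one {a b : Cardinal} (h : a * b = 1) : a = 1 ∧ b = 1 := by
  have ha : a ≠ 0 := by rintro rfl; simp at h
  have hb : b ≠ 0 := by rintro rfl; simp at h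
  have h1a : 1 ≤ a := Cardinal.one_le_iff_ne_zero.mpr ha
  have h1b : 1 ≤ b := Cardinal.one_le_iff_ne_zero.mpr hb
  constructor
  · exact le_antisymm (h ▸ le_mul_of_one_le_right (show (0 : Cardinal) ≤ a from zero_le) h1b) h1a
  · exact le_antisymm (h ▸ le_mul_of_one_le_left (show (0 : Cardinal) ≤ b from zero_le) h1a) h1b

lemma dsc_subsingleton {ι : Type} [DecidableEq ι] (M : ι → Type)
    [∀ i, AddCommGroup (M i)] [∀ i, Module K (M i)]
    (h : Subsingleton (DirectSum ι M)) (i : ι) : Subsingleton (M i) := by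
  refine ⟨fun a b => ?_⟩
  have ha := DirectSum.component.lof_self (R := K) (M := M) i a
  have hb := DirectSum.component.lof_self (R := K) (M := M) i b
  rw [← ha, ← hb]
  exact congrArg _ (h.elim _ _)

lemma ds_exists_nontrivial {ι : Type} [DecidableEq ι] (M : ι → Type)
    [∀ i, AddCommGroup (M i)] [∀ i, Module K (M i)]
    (e : DirectSum ι M ≃ₗ[K] K) : ∃ i, Nontrivial (M i) := by
  by_contra h
  push_neg at h
  haveI : Subsingleton (DirectSum ι M) :=
    ds_subsingleton' M fun i => h i
  exact not_subsingleton K (Equiv.subsingleton e.symm.toEquiv)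

lemma ds_rank_one {ι : Type} [DecidableEq ι] (M : ι → Type)
    [∀ i, AddCommGroup (M i)] [∀ i, Module K (M i)]
    (e : DirectSum ι M ≃ₗ[K] K) (i : ι) (hi : Nontrivial (M i)) :
    Module.rank K (M i) = 1 := by
  refine le_antisymm ?_ (Cardinal.one_le_iff_pos.mpr (rank_pos_iff_nontrivial.mpr hi))
  have hinj : Function.Injective (DirectSum.lof K ι M i) :=
    Function.LeftInverse.injective (g := DirectSum.component K ι M i)
      (fun x => DirectSum.component.lof_self (R := K) i x)
  have hle := LinearMap.rank_le_of_injective _ hinj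
  rwa [e.rank_eq, Module.rank_self] at hle

end auxx

/-- The degree-`n` piece of the graded tensor product of two `ℤ`-graded
`K`-vector spaces. -/
noncomputable def gradedTensorPiece (K : Type) [Field K]
    (V W : ℤ → ModuleCat K) (n : ℤ) : Type :=
  DirectSum {p : ℤ × ℤ // p.1 + p.2 = n} fun p => (V p.1.1) ⊗[K] (W p.1.2)

noncomputable instance (K : Type) [Field K] (V W : ℤ → ModuleCat K) (n : ℤ) :
    AddCommGroup (gradedTensorPiece K V W n) := by
  unfold gradedTensorPiece; infer_instance

noncomputable instance (K : Type) [Field K] (V W : ℤ → ModuleCat K) (n : ℤ) :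
    Module K (gradedTensorPiece K V W n) := by
  unfold gradedTensorPiece; infer_instance

set_option maxHeartbeats 1000000 in
/-- A graded vector space is invertible iff its graded tensor product with some `W`
is isomorphic (degreewise) to the unit: `K` in degree `0` and `0` elsewhere. -/
theorem stmt_15 (K : Type) [Field K] (V : ℤ → ModuleCat K) :
    (∃ W : ℤ → ModuleCat K,
        Nonempty (gradedTensorPiece K V W 0 ≃ₗ[K] K) ∧
        ∀ n : ℤ, n ≠ 0 → Subsingleton (gradedTensorPiece K V W n)) ↔
      ∃ d : ℤ, Nonempty (V d ≃ₗ[K] K) ∧ ∀ n : ℤ, n ≠ d → Subsingleton (V n) := by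
  constructor
  · rintro ⟨W, ⟨e⟩, htriv⟩
    unfold gradedTensorPiece at e htriv
    have hA : ∀ (i j : ℤ), i + j ≠ 0 → Subsingleton ((V i) ⊗[K] (W j)) := by
      intro i j hij
      exact dsc_subsingleton (K := K) _ (htriv _ hij) ⟨(i, j), rfl⟩
    obtain ⟨⟨⟨a, b⟩, hab⟩, hp⟩ := ds_exists_nontrivial _ e
    have hb : b = -a := by omega
    subst hb
    have hr1 : Module.rank K ((V a) ⊗[K] (W (-a))) = 1 :=
      ds_rank_one _ e ⟨(a, -a), hab⟩ hp
    have hmul : Module.rank K (V a) * Module.rank K (W (-a)) = 1 := by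
      rw [← rank_tensorProduct']; exact hr1
    obtain ⟨hVa, hWa⟩ := card_mul_one hmul
    refine ⟨a, equiv_of_rank_one' hVa, ?_⟩
    intro n hn
    have hts : Subsingleton ((V n) ⊗[K] (W (-a))) := hA n (-a) (by omega)
    have hzero : Module.rank K (V n) * Module.rank K (W (-a)) = 0 := by
      rw [← rank_tensorProduct']
      exact rank_zero_iff.mpr hts
    rw [hWa, mul_one] at hzero
    exact rank_zero_iff.mp hzero
  · rintro ⟨d, ⟨eV⟩, hV⟩
    refine ⟨fun n => V (n + 2 * d), ⟨?_⟩, ?_⟩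
    · have h : ∀ p : {p : ℤ × ℤ // p.1 + p.2 = 0},
          p ≠ (⟨(d, -d), by ring⟩ : {p : ℤ × ℤ // p.1 + p.2 = 0}) →
          Subsingleton ((V p.1.1) ⊗[K] (V (p.1.2 + 2 * d))) := by
        rintro ⟨⟨i, j⟩, hij⟩ hp
        by_cases hi : i = d
        · have hj : j + 2 * d ≠ d := by
            intro hcon
            apply hp
            simp only [Subtype.mk.injEq, Prod.mk.injEq]
            omega
          exact sub_ts_right (hV _ hj)
        · exact sub_ts_left (hV _ hi)
      have eV2 : (V ((-d : ℤ) + 2 * d) : Type) ≃ₗ[K] K := by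
        rw [show (-d : ℤ) + 2 * d = d by ring]
        exact eV
      exact (dsEquivComponent'
          (fun p : {p : ℤ × ℤ // p.1 + p.2 = 0} => (V p.1.1) ⊗[K] (V (p.1.2 + 2 * d)))
          ⟨(d, -d), by ring⟩ h).trans
        ((TensorProduct.congr eV eV2).trans (TensorProduct.lid K K))
    · intro n hn
      refine ds_subsingleton' _ ?_
      rintro ⟨⟨i, j⟩, hij⟩
      by_cases hi : i = d
      · exact sub_ts_right (hV (j + 2 * d) (by omega))
      · exact sub_ts_left (hV _ hi)
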